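/- Let G=(V,E) be a finite graph with coupling constants J:E→[0,∞), external field g:V→ℝ, and a vertex v∈V with g_v≥0. Let g^{(0)}:V→ℝ agree with g except that g^{(0)}_v=0, and set α = (1 − tanh(g_v)) / (1 + ⟨σ_v⟩_{g^{(0)}}·tanh(g_v)). Then α∈[0,1], the marginal law of σ_v under μ_g is the mixture with weights α and 1−α of its laws under μ_{g^{(0)}} and under conditioning on σ_v=1, and for every o∈V, ⟨σ_o⟩_g = α·⟨σ_o⟩_{g^{(0)}} + (1−α)·⟨σ_o | σ_v=1⟩_g. -/

import Mathlib

open Finset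

/-- The value ±1 of an Ising spin encoded by a Boolean. -/
noncomputable def spinval (b : Bool) : ℝ := if b then 1 else -1

/-- The (unnormalized) Gibbs weight of a spin configuration `σ` for the Ising model on a
finite vertex set `V` with symmetric coupling constants `J` and external field `f`:
`exp(Σ_{u~v} J_{uv} σ_u σ_v + Σ_u f_u σ_u)`, where the edge sum is written as half the
double sum over ordered pairs. -/
noncomputable def isingWeight {V : Type*} [Fintype V] [DecidableEq V]
    (J : V → V → ℝ) (f : V → ℝ) (σ : V → Bool) : ℝ :=
  Real.exp ((∑ u : V, ∑ v : V, J u v * spinval (σ u) * spinval (σ v)) / 2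
    + ∑ u : V, f u * spinval (σ u))

/-- Expectation `⟨X⟩_f` under the Ising Gibbs measure `μ_f`. -/
noncomputable def isingExp {V : Type*} [Fintype V] [DecidableEq V]
    (J : V → V → ℝ) (f : V → ℝ) (X : (V → Bool) → ℝ) : ℝ :=
  (∑ σ : V → Bool, X σ * isingWeight J f σ) / ∑ σ : V → Bool, isingWeight J f σ

open scoped Classical in
/-- Conditional expectation `⟨X | E⟩_f` under the Ising Gibbs measure `μ_f`,
conditioned on the event `E`. -/
noncomputable def isingCondExp {V : Type*} [Fintype V] [DecidableEq V]
    (J : V → V → ℝ) (f : V → ℝ) (E : (V → Bool) → Prop) (X : (V → Bool) → ℝ) : ℝ :=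
  (∑ σ ∈ Finset.univ.filter (fun σ => E σ), X σ * isingWeight J f σ) /
    ∑ σ ∈ Finset.univ.filter (fun σ => E σ), isingWeight J f σ

open scoped Classical in
/-- Probability `μ_f(E)` of an event `E` under the Ising Gibbs measure `μ_f`. -/
noncomputable def isingProb {V : Type*} [Fintype V] [DecidableEq V]
    (J : V → V → ℝ) (f : V → ℝ) (E : (V → Bool) → Prop) : ℝ :=
  (∑ σ ∈ Finset.univ.filter (fun σ => E σ), isingWeight J f σ) /
    ∑ σ : V → Bool, isingWeight J f σ

lemma isingWeight_update {V : Type*} [Fintype V] [DecidableEq V]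
    (J : V → V → ℝ) (g : V → ℝ) (v : V) (σ : V → Bool) :
    isingWeight J g σ
      = isingWeight J (Function.update g v 0) σ * Real.exp (g v * spinval (σ v)) := by
  unfold isingWeight
  rw [← Real.exp_add]
  congr 1
  have hsum : ∀ f : V → ℝ, ∑ u : V, f u * spinval (σ u)
      = (∑ u ∈ univ.erase v, f u * spinval (σ u)) + f v * spinval (σ v) := by
    intro f; rw [Finset.sum_erase_add _ _ (mem_univ v)]
  rw [hsum g, hsum (Function.update g v 0)]
  have hcg : ∀ u ∈ univ.erase v,
      Function.update g v 0 u * spinval (σ u) = g u * spinval (σ u) := by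
    intro u hu
    rw [Function.update_of_ne (Finset.ne_of_mem_erase hu)]
  rw [Finset.sum_congr rfl hcg, Function.update_self]
  ring

/-- **Mixture decomposition (eqs. (2.9)–(2.10)).** Let `v` have field value `g_v ≥ 0`, let
`g⁰` agree with `g` except `g⁰_v = 0`, and set
`α = (1 − tanh g_v)/(1 + ⟨σ_v⟩_{g⁰} tanh g_v)`. Then `α ∈ [0,1]`; the marginal law of `σ_v`
under `μ_g` is the `(α, 1−α)`-mixture of its law under `μ_{g⁰}` and the point mass at `+1`
(its law conditioned on `σ_v = 1`); and for every vertex `o`,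
`⟨σ_o⟩_g = α ⟨σ_o⟩_{g⁰} + (1−α) ⟨σ_o | σ_v = 1⟩_g`. -/
theorem mixture_decomposition_of_field_at_vertex
    {V : Type*} [Fintype V] [DecidableEq V]
    (J : V → V → ℝ) (hJsymm : ∀ u v, J u v = J v u) (hJnonneg : ∀ u v, 0 ≤ J u v)
    (g : V → ℝ) (v : V) (hgv : 0 ≤ g v) (α : ℝ)
    (hα : α = (1 - Real.tanh (g v)) /
      (1 + isingExp J (Function.update g v 0) (fun σ => spinval (σ v)) * Real.tanh (g v))) :
    0 ≤ α ∧ α ≤ 1 ∧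
      (∀ b : Bool, isingProb J g (fun σ => σ v = b)
        = α * isingProb J (Function.update g v 0) (fun σ => σ v = b)
          + (1 - α) * (if b then 1 else 0)) ∧
      (∀ o : V, isingExp J g (fun σ => spinval (σ o))
        = α * isingExp J (Function.update g v 0) (fun σ => spinval (σ o))
          + (1 - α) * isingCondExp J g (fun σ => σ v = true) (fun σ => spinval (σ o))) := by
  classical
  set g0 : V → ℝ := Function.update g v 0 with hg0
  set t : ℝ := Real.tanh (g v) with htdef
  set c : ℝ := Real.cosh (g v) with hcdef
  have hc : 0 < c := Real.cosh_pos (g v)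
  have ht0 : 0 ≤ t := by
    rw [htdef, Real.tanh_eq_sinh_div_cosh]
    exact div_nonneg (Real.sinh_nonneg_iff.mpr hgv) (Real.cosh_pos _).le
  have ht1 : t < 1 := by
    rw [htdef, Real.tanh_eq_sinh_div_cosh, div_lt_one (Real.cosh_pos _)]
    nlinarith [Real.cosh_sub_sinh (g v), Real.exp_pos (-(g v))]
  have hep : Real.exp (g v) = c * (1 + t) := by
    rw [hcdef, htdef, Real.tanh_eq_sinh_div_cosh]
    field_simp [(Real.cosh_pos (g v)).ne']
    exact (Real.cosh_add_sinh _).symm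
  have hem : Real.exp (-(g v)) = c * (1 - t) := by
    rw [hcdef, htdef, Real.tanh_eq_sinh_div_cosh]
    field_simp [(Real.cosh_pos (g v)).ne']
    exact (Real.cosh_sub_sinh _).symm
  set A : ℝ := ∑ σ ∈ univ.filter (fun σ : V → Bool => σ v = true), isingWeight J g0 σ with hAdef
  set B : ℝ := ∑ σ ∈ univ.filter (fun σ : V → Bool => σ v = false), isingWeight J g0 σ with hBdef
  have hApos : 0 < A := by
    apply Finset.sum_pos (fun σ _ => Real.exp_pos _)
    exact ⟨fun _ => true, by simp⟩
  have hBpos : 0 < B := by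
    apply Finset.sum_pos (fun σ _ => Real.exp_pos _)
    exact ⟨fun _ => false, by simp⟩
  -- splitting of sums according to the value of σ v
  have hsplit : ∀ F : (V → Bool) → ℝ,
      ∑ σ : V → Bool, F σ
        = (∑ σ ∈ univ.filter (fun σ : V → Bool => σ v = true), F σ)
          + ∑ σ ∈ univ.filter (fun σ : V → Bool => σ v = false), F σ := by
    intro F
    rw [← Finset.sum_filter_add_sum_filter_not univ (fun σ : V → Bool => σ v = true) F]
    congr 2
    apply Finset.filter_congr
    intro σ _
    simp
  -- factorization of filtered sums of weights for g
  have hfac : ∀ (b : Bool) (X : (V → Bool) → ℝ),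
      ∑ σ ∈ univ.filter (fun σ : V → Bool => σ v = b), X σ * isingWeight J g σ
        = Real.exp (g v * spinval b)
          * ∑ σ ∈ univ.filter (fun σ : V → Bool => σ v = b), X σ * isingWeight J g0 σ := by
    intro b X
    rw [Finset.mul_sum]
    apply Finset.sum_congr rfl
    intro σ hσ
    have hσv : σ v = b := (Finset.mem_filter.mp hσ).2
    rw [isingWeight_update J g v σ, ← hg0, hσv]
    ring
  have hsp1 : spinval true = 1 := rfl
  have hsp2 : spinval false = -1 := rfl
  have hone : ∀ (f : V → ℝ) (s : Finset (V → Bool)),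
      ∑ σ ∈ s, isingWeight J f σ = ∑ σ ∈ s, (1 : ℝ) * isingWeight J f σ := by
    intro f s; simp
  -- filtered weight sums for g
  have hWT : ∑ σ ∈ univ.filter (fun σ : V → Bool => σ v = true), isingWeight J g σ
      = c * (1 + t) * A := by
    rw [hone, hfac true, hsp1, mul_one, hep, hAdef]
    rw [← hone]
  have hWF : ∑ σ ∈ univ.filter (fun σ : V → Bool => σ v = false), isingWeight J g σ
      = c * (1 - t) * B := by
    rw [hone, hfac false, hsp2, mul_neg_one, hem, hBdef]
    rw [← hone]
  have hZ : ∑ σ : V → Bool, isingWeight J g σ = c * ((A + B) + (A - B) * t) := by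
    rw [hsplit (isingWeight J g), hWT, hWF]; ring
  have hZ0 : ∑ σ : V → Bool, isingWeight J g0 σ = A + B := by
    rw [hsplit (isingWeight J g0), ← hAdef, ← hBdef]
  have hD : 0 < (A + B) + (A - B) * t := by nlinarith
  have hABne : A + B ≠ 0 := ne_of_gt (add_pos hApos hBpos)
  have hDne : (A + B) + (A - B) * t ≠ 0 := ne_of_gt hD
  -- magnetization under g0
  have hm0 : isingExp J g0 (fun σ => spinval (σ v)) = (A - B) / (A + B) := by
    unfold isingExp
    rw [hZ0, hsplit (fun σ : V → Bool => spinval (σ v) * isingWeight J g0 σ)]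
    have h1 : ∑ σ ∈ univ.filter (fun σ : V → Bool => σ v = true),
        spinval (σ v) * isingWeight J g0 σ = A := by
      rw [hAdef]
      apply Finset.sum_congr rfl
      intro σ hσ
      rw [(Finset.mem_filter.mp hσ).2, hsp1, one_mul]
    have h2 : ∑ σ ∈ univ.filter (fun σ : V → Bool => σ v = false),
        spinval (σ v) * isingWeight J g0 σ = -B := by
      rw [hBdef, ← Finset.sum_neg_distrib]
      apply Finset.sum_congr rfl
      intro σ hσ
      rw [(Finset.mem_filter.mp hσ).2, hsp2]
      ring
    rw [h1, h2]
    ring_nf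
  have hden : 1 + (A - B) / (A + B) * t = ((A + B) + (A - B) * t) / (A + B) := by
    field_simp
  clear_value g0 t c A B
  have hαval : α = (1 - t) * (A + B) / ((A + B) + (A - B) * t) := by
    rw [hα, hm0, hden, div_div_eq_mul_div]
  have hα0 : 0 ≤ α := by
    rw [hαval]
    apply div_nonneg _ hD.le
    nlinarith
  have hα1 : α ≤ 1 := by
    rw [hαval, div_le_one hD]
    nlinarith
  -- the master mixture identity for an arbitrary observable X
  have key : ∀ X : (V → Bool) → ℝ,
      isingExp J g X = α * isingExp J g0 X
        + (1 - α) * isingCondExp J g (fun σ => σ v = true) X := by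
    intro X
    set Np : ℝ := ∑ σ ∈ univ.filter (fun σ : V → Bool => σ v = true),
      X σ * isingWeight J g0 σ with hNp
    set Nm : ℝ := ∑ σ ∈ univ.filter (fun σ : V → Bool => σ v = false),
      X σ * isingWeight J g0 σ with hNm
    have hnum : ∑ σ : V → Bool, X σ * isingWeight J g σ
        = c * (1 + t) * Np + c * (1 - t) * Nm := by
      rw [hsplit (fun σ : V → Bool => X σ * isingWeight J g σ), hfac true X, hfac false X,
        hsp1, hsp2, mul_one, mul_neg_one, hep, hem, ← hNp, ← hNm]
    have hnum0 : ∑ σ : V → Bool, X σ * isingWeight J g0 σ = Np + Nm := by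
      rw [hsplit (fun σ : V → Bool => X σ * isingWeight J g0 σ), ← hNp, ← hNm]
    have hcnum : ∑ σ ∈ univ.filter (fun σ : V → Bool => σ v = true),
        X σ * isingWeight J g σ = c * (1 + t) * Np := by
      rw [hfac true X, hsp1, mul_one, hep, ← hNp]
    unfold isingExp isingCondExp
    rw [Finset.filter_congr_decidable]
    rw [hnum, hnum0, hcnum, hZ, hZ0, hWT, hαval]
    have h1t : (0:ℝ) < 1 + t := by linarith
    have hDne' : A + B + t * (A - B) ≠ 0 := fun h => hDne (by linarith)
    field_simp
    ring
  refine ⟨hα0, hα1, ?_, fun o => key _⟩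
  -- the marginal law statement
  intro b
  have hDne' : A + B + t * (A - B) ≠ 0 := fun h => hDne (by linarith)
  have hX : isingProb J g (fun σ => σ v = b)
      = α * isingProb J g0 (fun σ => σ v = b) + (1 - α) * (if b then 1 else 0) := by
    unfold isingProb
    rw [Finset.filter_congr_decidable]
    cases b with
    | true =>
      rw [hWT, hZ, ← hAdef, hZ0, hαval, if_pos rfl, mul_one]
      field_simp [hc.ne', hDne, hABne]
      ring
    | false =>
      rw [hWF, hZ, ← hBdef, hZ0, hαval, if_neg Bool.false_ne_true, mul_zero, add_zero]
      field_simp [hc.ne', hDne, hABne]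
  exact hX
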